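/- Gibbs variational principle: for a probability measure P on a measurable space and a bounded measurable function G, log ∫ e^G dP = sup_Q ( ∫ G dQ - H(Q | P) ), where the supremum is over probability measures Q absolutely continuous with respect to P, and H(Q|P) = ∫ (dQ/dP) log(dQ/dP) dP is the relative entropy. The supremum is attained by dQ* = e^G dP / ∫ e^G dP. -/

import Mathlib

open MeasureTheory

lemma gibbs_aux_ineq (x y : ℝ) (hx : 0 ≤ x) :
    x * y - x * Real.log x ≤ Real.exp y - x := by
  rcases hx.eq_or_lt with h | h
  · simp [← h, (Real.exp_pos y).le]
  · have ht : 0 < Real.exp y / x := by positivity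
    have hlog := Real.log_le_sub_one_of_pos ht
    have hlogeq : Real.log (Real.exp y / x) = y - Real.log x := by
      rw [Real.log_div (Real.exp_pos y).ne' h.ne', Real.log_exp]
    have := mul_le_mul_of_nonneg_left hlog hx
    rw [hlogeq] at this
    have hxx : x * (Real.exp y / x) = Real.exp y := by
      field_simp
    nlinarith

lemma gibbs_int_of_bdd {α : Type*} [MeasurableSpace α] {P : Measure α} [IsFiniteMeasure P]
    {f : α → ℝ} (hm : Measurable f) {C : ℝ} (h : ∀ a, |f a| ≤ C) : Integrable f P :=
  Integrable.mono' (integrable_const C) hm.aestronglyMeasurable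
    (Filter.Eventually.of_forall fun a => by simpa using h a)

/-- Gibbs variational principle: `log ∫ e^G dP` is the maximum over probability
measures `Q ≪ P` of `∫ G dQ - H(Q|P)`, and the maximum is attained by the Gibbs
measure with density `e^G / ∫ e^G dP`. -/
theorem stmt11 {α : Type*} [MeasurableSpace α] (P : Measure α) [IsProbabilityMeasure P]
    (G : α → ℝ) (hGmeas : Measurable G) (hGbdd : ∃ C : ℝ, ∀ a, |G a| ≤ C) :
    IsGreatest {r : ℝ | ∃ Q : Measure α, IsProbabilityMeasure Q ∧ Q ≪ P ∧
        Integrable (fun a => (Q.rnDeriv P a).toReal * Real.log (Q.rnDeriv P a).toReal) P ∧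
        r = (∫ a, G a ∂Q) -
          ∫ a, (Q.rnDeriv P a).toReal * Real.log (Q.rnDeriv P a).toReal ∂P}
      (Real.log (∫ a, Real.exp (G a) ∂P)) ∧
    Real.log (∫ a, Real.exp (G a) ∂P) =
      (∫ a, G a ∂(P.withDensity
          (fun a => ENNReal.ofReal (Real.exp (G a) / ∫ a', Real.exp (G a') ∂P))))
        - ∫ a, (Real.exp (G a) / ∫ a', Real.exp (G a') ∂P) *
            Real.log (Real.exp (G a) / ∫ a', Real.exp (G a') ∂P) ∂P := by
  obtain ⟨C, hC⟩ := hGbdd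
  set Z : ℝ := ∫ a, Real.exp (G a) ∂P with hZdef
  have hGint : Integrable G P := gibbs_int_of_bdd hGmeas hC
  have hexp_int : Integrable (fun a => Real.exp (G a)) P :=
    gibbs_int_of_bdd hGmeas.exp (C := Real.exp C) fun a => by
      rw [abs_of_pos (Real.exp_pos _)]
      exact Real.exp_le_exp.2 (abs_le.1 (hC a)).2
  have hZpos : 0 < Z := by
    have h1 : (0:ℝ) < ∫ _, Real.exp (-C) ∂P := by
      simp [Real.exp_pos]
    refine lt_of_lt_of_le h1 (integral_mono (integrable_const _) hexp_int fun a => ?_)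
    exact Real.exp_le_exp.2 (neg_le_of_abs_le (hC a))
  set ρ : α → ℝ := fun a => Real.exp (G a) / Z with hρdef
  have hρmeas : Measurable ρ := hGmeas.exp.div_const Z
  have hρnonneg : ∀ a, 0 ≤ ρ a := fun a => by positivity
  have hρbdd : ∀ a, |ρ a| ≤ Real.exp C / Z := fun a => by
    rw [abs_of_nonneg (hρnonneg a)]
    exact div_le_div_of_nonneg_right (Real.exp_le_exp.2 (abs_le.1 (hC a)).2) hZpos.le
  have hρint : Integrable ρ P := gibbs_int_of_bdd hρmeas hρbdd
  have hρsum : ∫ a, ρ a ∂P = 1 := by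
    simp only [hρdef, integral_div]
    exact div_self hZpos.ne'
  have hlogρ : ∀ a, Real.log (ρ a) = G a - Real.log Z := fun a => by
    rw [hρdef, Real.log_div (Real.exp_pos _).ne' hZpos.ne', Real.log_exp]
  have hkey : ∀ a, ρ a * Real.log (ρ a) = ρ a * G a - Real.log Z * ρ a := fun a => by
    rw [hlogρ a]; ring
  have hρGint : Integrable (fun a => ρ a * G a) P :=
    hGint.bdd_mul (c := Real.exp C / Z) hρmeas.aestronglyMeasurable (Filter.Eventually.of_forall fun a => by
      simpa using hρbdd a)
  have hρlogint : Integrable (fun a => ρ a * Real.log (ρ a)) P := by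
    have := hρGint.sub (hρint.const_mul (Real.log Z))
    exact this.congr (Filter.Eventually.of_forall fun a => (hkey a).symm)
  set Qs : Measure α := P.withDensity (fun a => ENNReal.ofReal (ρ a)) with hQsdef
  have hQsac : Qs ≪ P := withDensity_absolutelyContinuous P _
  have hQsprob : IsProbabilityMeasure Qs := by
    constructor
    rw [hQsdef, withDensity_apply _ MeasurableSet.univ, setLIntegral_univ,
      ← ofReal_integral_eq_lintegral_ofReal hρint
        (Filter.Eventually.of_forall hρnonneg), hρsum]
    simp
  have hrn : (fun a => (Qs.rnDeriv P a).toReal) =ᵐ[P] ρ := by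
    filter_upwards [Measure.rnDeriv_withDensity P (hρmeas.ennreal_ofReal)] with a ha
    rw [ha, ENNReal.toReal_ofReal (hρnonneg a)]
  have hIQ : ∫ a, G a ∂Qs = ∫ a, ρ a * G a ∂P := by
    rw [← integral_rnDeriv_smul hQsac]
    refine integral_congr_ae ?_
    filter_upwards [hrn] with a ha
    rw [smul_eq_mul, ha]
  have hH : ∫ a, ρ a * Real.log (ρ a) ∂P = (∫ a, ρ a * G a ∂P) - Real.log Z := by
    calc ∫ a, ρ a * Real.log (ρ a) ∂P
        = ∫ a, (ρ a * G a - Real.log Z * ρ a) ∂P :=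
          integral_congr_ae (Filter.Eventually.of_forall hkey)
      _ = (∫ a, ρ a * G a ∂P) - Real.log Z * ∫ a, ρ a ∂P := by
          rw [integral_sub hρGint (hρint.const_mul _), integral_const_mul]
      _ = (∫ a, ρ a * G a ∂P) - Real.log Z := by rw [hρsum, mul_one]
  have hpart2 : Real.log Z = (∫ a, G a ∂Qs) - ∫ a, ρ a * Real.log (ρ a) ∂P := by
    rw [hIQ, hH]; ring
  refine ⟨⟨⟨Qs, hQsprob, hQsac, ?_, ?_⟩, ?_⟩, hpart2⟩
  · -- integrability for Qs
    refine hρlogint.congr ?_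
    filter_upwards [hrn] with a ha
    rw [ha]
  · -- value for Qs
    rw [hpart2]
    congr 1
    refine integral_congr_ae ?_
    filter_upwards [hrn] with a ha
    rw [ha]
  · -- upper bound
    rintro r ⟨Q, hQprob, hQP, hQlogint, hr⟩
    set f : α → ℝ := fun a => (Q.rnDeriv P a).toReal with hfdef
    have hf_int : Integrable f P := Measure.integrable_toReal_rnDeriv
    have hf_nonneg : ∀ a, 0 ≤ f a := fun a => ENNReal.toReal_nonneg
    have hf_meas : Measurable f := (Measure.measurable_rnDeriv Q P).ennreal_toReal
    have hfsum : ∫ a, f a ∂P = 1 := by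
      rw [hfdef, Measure.integral_toReal_rnDeriv hQP]
      simp
    have hQG : ∫ a, G a ∂Q = ∫ a, f a * G a ∂P := by
      rw [← integral_rnDeriv_smul hQP]
      rfl
    have hfG_int : Integrable (fun a => f a * G a) P := by
      have : Integrable (fun a => G a * f a) P :=
        hf_int.bdd_mul (c := C) hGmeas.aestronglyMeasurable (Filter.Eventually.of_forall fun a => by simpa using hC a)
      exact this.congr (Filter.Eventually.of_forall fun a => mul_comm _ _)
    -- pointwise inequality with y = G a - log Z
    have hpt : ∀ a, f a * G a - Real.log Z * f a - f a * Real.log (f a)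
        ≤ Real.exp (G a) / Z - f a := by
      intro a
      have := gibbs_aux_ineq (f a) (G a - Real.log Z) (hf_nonneg a)
      have hexp : Real.exp (G a - Real.log Z) = Real.exp (G a) / Z := by
        rw [Real.exp_sub, Real.exp_log hZpos]
      rw [hexp] at this
      nlinarith
    have hlhs_int : Integrable
        (fun a => f a * G a - Real.log Z * f a - f a * Real.log (f a)) P :=
      (hfG_int.sub (hf_int.const_mul _)).sub hQlogint
    have hrhs_int : Integrable (fun a => Real.exp (G a) / Z - f a) P :=
      (hexp_int.div_const Z).sub hf_int
    have hQlogint' : Integrable (fun a => f a * Real.log (f a)) P := hQlogint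
    have hint_le := integral_mono hlhs_int hrhs_int hpt
    have e1 : ∫ a, (f a * G a - Real.log Z * f a - f a * Real.log (f a)) ∂P
        = (∫ a, f a * G a ∂P) - Real.log Z - ∫ a, f a * Real.log (f a) ∂P := by
      have h1 : Integrable (fun a => f a * G a - Real.log Z * f a) P :=
        hfG_int.sub (hf_int.const_mul _)
      rw [integral_sub h1 hQlogint',
        integral_sub hfG_int (hf_int.const_mul _), integral_const_mul, hfsum, mul_one]
    have e2 : ∫ a, (Real.exp (G a) / Z - f a) ∂P = 0 := by
      rw [integral_sub (hexp_int.div_const Z) hf_int, integral_div, hfsum,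
        div_self hZpos.ne']
      ring
    rw [e1, e2] at hint_le
    have e3 : ∫ a, (Q.rnDeriv P a).toReal * Real.log ((Q.rnDeriv P a).toReal) ∂P
        = ∫ a, f a * Real.log (f a) ∂P := rfl
    rw [hr, hQG, e3]
    linarith
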